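/- Every walk in the graph G starting from the vertex root has length (number of edges) at most n + ⌈log₂ m⌉, this maximum length is attained, and every walk of length exactly n + ⌈log₂ m⌉ starting from root ends either at the vertex u_0^n or at the vertex v_0^n. -/

import Mathlib

namespace GraphDB

/-- Vertices of the graph `G` produced by the SAT reduction.
`node k p` is the vertex of the binary tree at depth `k` and position `p`
(in heap-style ordering); in particular `node 0 0` is the root and, with
`d = ⌈log₂ m⌉`, the leaf `node d (i-1)` is the clause vertex `c_i`.
`u i j` and `v i j` are the vertices `u_i^j` and `v_i^j` (with `i = 0`
giving `u_0^j`, `v_0^j`). -/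
inductive Vtx : Type
  | node (k p : ℕ)
  | u (i j : ℕ)
  | v (i j : ℕ)
  deriving DecidableEq

/-- The edge relation of the graph `G` obtained from the SAT instance with
`n` variables `x_1, …, x_n` and `m` clauses `c_1, …, c_m`, where
`c i j = some true` means that the literal `x_j` occurs in clause `c_i`,
`c i j = some false` means that the literal `¬x_j` occurs in `c_i`, and
`c i j = none` means that the variable `x_j` does not occur in `c_i`. -/
def Edge (n m : ℕ) (c : ℕ → ℕ → Option Bool) : Vtx → Vtx → Prop := fun a b =>
  match a, b with
  | .node k p, .node k' q =>
      k' = k + 1 ∧ k' ≤ Nat.clog 2 m ∧ (q = 2 * p ∨ q = 2 * p + 1) ∧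
        q * 2 ^ (Nat.clog 2 m - k') < m
  | .node k p, .u i j => k = Nat.clog 2 m ∧ p < m ∧ i = p + 1 ∧ j = 1
  | .node k p, .v i j => k = Nat.clog 2 m ∧ p < m ∧ i = p + 1 ∧ j = 1
  | .u i j, .u i' j' =>
      j' = j + 1 ∧
        ((i = 0 ∧ i' = 0 ∧ 2 ≤ j ∧ j + 1 ≤ n) ∨
         (1 ≤ i ∧ i ≤ m ∧ i' = 0 ∧ 1 ≤ j ∧ j + 1 ≤ n ∧
            (c i j = some true ∨ (j + 1 = n ∧ c i n = some true))) ∨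
         (1 ≤ i ∧ i ≤ m ∧ i' = i ∧ 1 ≤ j ∧ j + 2 ≤ n ∧ c i j ≠ some true))
  | .u i j, .v i' j' =>
      j' = j + 1 ∧
        ((i = 0 ∧ i' = 0 ∧ 2 ≤ j ∧ j + 1 ≤ n) ∨
         (1 ≤ i ∧ i ≤ m ∧ i' = 0 ∧ 1 ≤ j ∧ j + 1 ≤ n ∧
            (c i j = some true ∨ (j + 1 = n ∧ c i n = some false))) ∨
         (1 ≤ i ∧ i ≤ m ∧ i' = i ∧ 1 ≤ j ∧ j + 2 ≤ n ∧ c i j ≠ some true))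
  | .v i j, .u i' j' =>
      j' = j + 1 ∧
        ((i = 0 ∧ i' = 0 ∧ 2 ≤ j ∧ j + 1 ≤ n) ∨
         (1 ≤ i ∧ i ≤ m ∧ i' = 0 ∧ 1 ≤ j ∧ j + 1 ≤ n ∧
            (c i j = some false ∨ (j + 1 = n ∧ c i n = some true))) ∨
         (1 ≤ i ∧ i ≤ m ∧ i' = i ∧ 1 ≤ j ∧ j + 2 ≤ n ∧ c i j ≠ some false))
  | .v i j, .v i' j' =>
      j' = j + 1 ∧
        ((i = 0 ∧ i' = 0 ∧ 2 ≤ j ∧ j + 1 ≤ n) ∨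
         (1 ≤ i ∧ i ≤ m ∧ i' = 0 ∧ 1 ≤ j ∧ j + 1 ≤ n ∧
            (c i j = some false ∨ (j + 1 = n ∧ c i n = some false))) ∨
         (1 ≤ i ∧ i ≤ m ∧ i' = i ∧ 1 ≤ j ∧ j + 2 ≤ n ∧ c i j ≠ some false))
  | _, _ => False

/-- The vertex labeling `ℓ` of `G`: the vertices `v_i^j` are labeled `0`
(`false`), all other vertices are labeled `1` (`true`). -/
def lab : Vtx → Bool
  | .v _ _ => false
  | _ => true

/-- The starting vertex `root` of `G`. -/
def root : Vtx := .node 0 0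

/-- `occG n m c a t` is `occ_a^G(t)`: the number of walks `w_1 w_2 … w_k`
in `G` with `w_1 = a` and `ℓ(w_j) = t_j` for all `j ∈ {1, …, k}`. -/
noncomputable def occG (n m : ℕ) (c : ℕ → ℕ → Option Bool) (a : Vtx) (t : List Bool) : ℕ :=
  Set.ncard {w : List Vtx | List.Chain' (Edge n m c) w ∧ w.head? = some a ∧ w.map lab = t}

end GraphDB

namespace GraphDB

private def dep (m : ℕ) : Vtx → ℕ
  | .node k _ => k
  | .u _ j => Nat.clog 2 m + j
  | .v _ j => Nat.clog 2 m + j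

private def Ok (n m : ℕ) : Vtx → Prop
  | .node k _ => k ≤ Nat.clog 2 m
  | .u i j => 1 ≤ j ∧ j ≤ n ∧ (j = n → i = 0)
  | .v i j => 1 ≤ j ∧ j ≤ n ∧ (j = n → i = 0)

private lemma step (n m : ℕ) (hn : 2 ≤ n) (c : ℕ → ℕ → Option Bool) {a b : Vtx}
    (h : Edge n m c a b) (ha : Ok n m a) :
    Ok n m b ∧ dep m b = dep m a + 1 ∧ dep m a < n + Nat.clog 2 m := by
  cases a <;> cases b <;> simp only [Edge, Ok, dep] at h ha ⊢ <;>
    first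
      | exact h.elim
      | omega

private lemma dep_le (n m : ℕ) {a : Vtx} (ha : Ok n m a) : dep m a ≤ n + Nat.clog 2 m := by
  cases a <;> simp only [Ok, dep] at ha ⊢ <;> omega

private lemma atTop (n m : ℕ) (hn : 2 ≤ n) {a : Vtx} (ha : Ok n m a)
    (hd : dep m a = n + Nat.clog 2 m) : a = Vtx.u 0 n ∨ a = Vtx.v 0 n := by
  cases a with
  | node k p => simp only [Ok, dep] at ha hd; omega
  | u i j =>
    simp only [Ok, dep] at ha hd
    left
    have hj : j = n := by omega
    rw [hj, ha.2.2 hj]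
  | v i j =>
    simp only [Ok, dep] at ha hd
    right
    have hj : j = n := by omega
    rw [hj, ha.2.2 hj]

private lemma walk_bound (n m : ℕ) (hn : 2 ≤ n) (c : ℕ → ℕ → Option Bool) :
    ∀ (w : List Vtx) (a : Vtx), List.Chain' (Edge n m c) w → w.head? = some a →
      Ok n m a →
      w.length + dep m a ≤ n + Nat.clog 2 m + 1 ∧
      (w.length + dep m a = n + Nat.clog 2 m + 1 →
        w.getLast? = some (Vtx.u 0 n) ∨ w.getLast? = some (Vtx.v 0 n)) := by
  intro w
  induction w with
  | nil => intro a _ hh _; simp at hh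
  | cons x l ih =>
    intro a hch hh ha
    rw [List.head?_cons, Option.some.injEq] at hh
    subst hh
    cases l with
    | nil =>
      have hd := dep_le n m ha
      constructor
      · simp only [List.length_cons, List.length_nil]; omega
      · intro he
        have hdn : dep m x = n + Nat.clog 2 m := by
          simp only [List.length_cons, List.length_nil] at he; omega
        rcases atTop n m hn ha hdn with h | h <;> simp [h]
    | cons b l' =>
      rw [List.Chain', List.isChain_cons_cons] at hch
      obtain ⟨hOkb, hdep, _⟩ := step n m hn c hch.1 ha
      have ih' := ih b hch.2 rfl hOkb
      rw [List.getLast?_cons_cons]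
      constructor
      · have := ih'.1; simp only [List.length_cons] at this ⊢; omega
      · intro he
        apply ih'.2
        simp only [List.length_cons] at he ⊢; omega

private def path (n m : ℕ) (c : ℕ → ℕ → Option Bool) (J : ℕ) (k : ℕ) : Vtx :=
  if k ≤ Nat.clog 2 m then .node k 0
  else if k - Nat.clog 2 m ≤ J ∧ k - Nat.clog 2 m ≤ n - 1 then
    (if c 1 J = some false then .v 1 (k - Nat.clog 2 m) else .u 1 (k - Nat.clog 2 m))
  else if J = n ∧ c 1 n = some false then .v 0 (k - Nat.clog 2 m)
  else .u 0 (k - Nat.clog 2 m)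

private lemma path_edge (n m : ℕ) (hn : 2 ≤ n) (hm : 1 ≤ m)
    (c : ℕ → ℕ → Option Bool) (J : ℕ) (hJ1 : 1 ≤ J) (hJn : J ≤ n)
    (hJc : c 1 J ≠ none) (hmin : ∀ j, 1 ≤ j → j < J → c 1 j = none)
    {k : ℕ} (hk : k < n + Nat.clog 2 m) :
    Edge n m c (path n m c J k) (path n m c J (k + 1)) := by
  rcases Nat.lt_or_ge k (Nat.clog 2 m) with h1 | h1
  · -- tree step
    have e1 : path n m c J k = .node k 0 := by rw [path, if_pos (by omega)]
    have e2 : path n m c J (k + 1) = .node (k + 1) 0 := by rw [path, if_pos (by omega)]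
    rw [e1, e2]
    exact ⟨rfl, by omega, Or.inl (by omega), by simpa using (show 0 < m by omega)⟩
  rcases Nat.eq_or_lt_of_le h1 with h2 | h2
  · -- node Nat.clog 2 m 0 → track 1
    have e1 : path n m c J k = .node (Nat.clog 2 m) 0 := by rw [path, if_pos (by omega), ← h2]
    have e2 : path n m c J (k + 1) =
        (if c 1 J = some false then Vtx.v 1 (k + 1 - Nat.clog 2 m) else Vtx.u 1 (k + 1 - Nat.clog 2 m)) := by
      rw [path, if_neg (by omega), if_pos (by omega)]
    rw [e1, e2]
    have hkd : k + 1 - Nat.clog 2 m = 1 := by omega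
    rw [hkd]
    split <;> exact ⟨rfl, by omega, rfl, rfl⟩
  -- on the u/v part; let j := k - Nat.clog 2 m ≥ 1
  have hj1 : 1 ≤ k - Nat.clog 2 m := by omega
  by_cases h3 : k - Nat.clog 2 m < J ∧ k - Nat.clog 2 m < n - 1
  · -- internal track step
    have hcnone : c 1 (k - Nat.clog 2 m) = none := hmin _ hj1 (by omega)
    have e1 : path n m c J k =
        (if c 1 J = some false then Vtx.v 1 (k - Nat.clog 2 m) else Vtx.u 1 (k - Nat.clog 2 m)) := by
      rw [path, if_neg (by omega), if_pos (by omega)]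
    have e2 : path n m c J (k + 1) =
        (if c 1 J = some false then Vtx.v 1 (k + 1 - Nat.clog 2 m) else Vtx.u 1 (k + 1 - Nat.clog 2 m)) := by
      rw [path, if_neg (by omega), if_pos (by omega)]
    rw [e1, e2]
    have hkd : k + 1 - Nat.clog 2 m = (k - Nat.clog 2 m) + 1 := by omega
    rw [hkd]
    split <;>
      exact ⟨rfl, Or.inr (Or.inr ⟨le_refl 1, hm, rfl, hj1, by omega, by simp [hcnone]⟩)⟩
  have hkn : k - Nat.clog 2 m ≤ n - 1 := by omega
  by_cases h4u : k - Nat.clog 2 m < J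
  · -- then k - Nat.clog 2 m = n - 1 and J = n; final step
    have hJn' : J = n := by omega
    have hkd : k - Nat.clog 2 m = n - 1 := by omega
    have e1 : path n m c J k =
        (if c 1 J = some false then Vtx.v 1 (k - Nat.clog 2 m) else Vtx.u 1 (k - Nat.clog 2 m)) := by
      rw [path, if_neg (by omega), if_pos (by omega)]
    rw [e1]
    by_cases hcf : c 1 n = some false
    · have e2 : path n m c J (k + 1) = Vtx.v 0 (k + 1 - Nat.clog 2 m) := by
        rw [path, if_neg (by omega), if_neg (by omega), if_pos ⟨hJn', hcf⟩]
      rw [e2, if_pos (hJn' ▸ hcf)]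
      have hk1 : k + 1 - Nat.clog 2 m = n := by omega
      rw [hk1]
      exact ⟨by omega, Or.inr (Or.inl ⟨le_refl 1, hm, rfl, by omega, by omega,
        Or.inr ⟨by omega, hcf⟩⟩)⟩
    · have hct : c 1 n = some true := by
        cases hc : c 1 n with
        | none => exact absurd (hJn' ▸ hc) hJc
        | some b => cases b with
          | false => exact absurd hc hcf
          | true => rfl
      have e2 : path n m c J (k + 1) = Vtx.u 0 (k + 1 - Nat.clog 2 m) := by
        rw [path, if_neg (by omega), if_neg (by omega), if_neg (by simp [hcf])]
      rw [e2, if_neg (by rw [hJn']; exact hcf)]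
      have hk1 : k + 1 - Nat.clog 2 m = n := by omega
      rw [hk1]
      exact ⟨by omega, Or.inr (Or.inl ⟨le_refl 1, hm, rfl, by omega, by omega,
        Or.inr ⟨by omega, hct⟩⟩)⟩
  by_cases h5 : k - Nat.clog 2 m ≤ J
  · -- k - Nat.clog 2 m = J : escape step
    have hkd : k - Nat.clog 2 m = J := by omega
    have hnf : ¬ (J = n ∧ c 1 n = some false) := fun hc => absurd hc.1 (by omega)
    have e1 : path n m c J k =
        (if c 1 J = some false then Vtx.v 1 (k - Nat.clog 2 m) else Vtx.u 1 (k - Nat.clog 2 m)) := by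
      rw [path, if_neg (by omega), if_pos (by omega)]
    have e2 : path n m c J (k + 1) = Vtx.u 0 (k + 1 - Nat.clog 2 m) := by
      rw [path, if_neg (by omega), if_neg (by omega), if_neg hnf]
    rw [e1, e2]
    have hk1 : k + 1 - Nat.clog 2 m = (k - Nat.clog 2 m) + 1 := by omega
    rw [hk1]
    by_cases hcf : c 1 J = some false
    · rw [if_pos hcf]
      exact ⟨rfl, Or.inr (Or.inl ⟨le_refl 1, hm, rfl, by omega, by omega,
        Or.inl (hkd ▸ hcf)⟩)⟩
    · have hct : c 1 J = some true := by
        cases hc : c 1 J with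
        | none => exact absurd hc hJc
        | some b => cases b with
          | false => exact absurd hc hcf
          | true => rfl
      rw [if_neg hcf]
      exact ⟨rfl, Or.inr (Or.inl ⟨le_refl 1, hm, rfl, by omega, by omega,
        Or.inl (hkd ▸ hct)⟩)⟩
  · -- climb step with i = 0
    have e1 : path n m c J k =
        (if J = n ∧ c 1 n = some false then Vtx.v 0 (k - Nat.clog 2 m) else Vtx.u 0 (k - Nat.clog 2 m)) := by
      rw [path, if_neg (by omega), if_neg (by omega)]
    have e2 : path n m c J (k + 1) =
        (if J = n ∧ c 1 n = some false then Vtx.v 0 (k + 1 - Nat.clog 2 m) else Vtx.u 0 (k + 1 - Nat.clog 2 m)) := by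
      rw [path, if_neg (by omega), if_neg (by omega)]
    rw [e1, e2]
    have hk1 : k + 1 - Nat.clog 2 m = (k - Nat.clog 2 m) + 1 := by omega
    rw [hk1]
    split <;> exact ⟨rfl, Or.inl ⟨rfl, rfl, by omega, by omega⟩⟩

/-- Lemma 1 of the paper: every walk in `G` starting at `root`
has at most `n + ⌈log₂ m⌉` edges (i.e. at most `n + ⌈log₂ m⌉ + 1` vertices),
this maximal length is attained, and every walk of exactly `n + ⌈log₂ m⌉`
edges starting at `root` ends at `u_0^n` or at `v_0^n`. -/
theorem longest_walk (n m : ℕ) (hn : 2 ≤ n) (hm : 1 ≤ m)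
    (c : ℕ → ℕ → Option Bool)
    (hne : ∀ i, 1 ≤ i → i ≤ m → ∃ j, 1 ≤ j ∧ j ≤ n ∧ c i j ≠ none) :
    (∀ w : List Vtx, List.Chain' (Edge n m c) w → w.head? = some root →
        w.length ≤ n + Nat.clog 2 m + 1) ∧
    (∃ w : List Vtx, List.Chain' (Edge n m c) w ∧ w.head? = some root ∧
        w.length = n + Nat.clog 2 m + 1) ∧
    (∀ w : List Vtx, List.Chain' (Edge n m c) w → w.head? = some root →
        w.length = n + Nat.clog 2 m + 1 →
        (w.getLast? = some (Vtx.u 0 n) ∨ w.getLast? = some (Vtx.v 0 n))) := by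
  have hOkroot : Ok n m root := by simp [Ok, root]
  have hdeproot : dep m root = 0 := rfl
  refine ⟨?_, ?_, ?_⟩
  · intro w hch hh
    have := (walk_bound n m hn c w root hch hh hOkroot).1
    rw [hdeproot] at this
    omega
  · have hP : ∃ j, 1 ≤ j ∧ j ≤ n ∧ c 1 j ≠ none := hne 1 le_rfl hm
    set J := Nat.find hP with hJdef
    obtain ⟨hJ1, hJn, hJc⟩ := Nat.find_spec hP
    have hminJ : ∀ j, 1 ≤ j → j < J → c 1 j = none := by
      intro j h1 h2
      have h3 := Nat.find_min hP h2
      by_contra hcon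
      exact h3 ⟨h1, by omega, hcon⟩
    refine ⟨(List.range (n + Nat.clog 2 m + 1)).map (path n m c J), ?_, ?_, by simp⟩
    · rw [List.Chain', List.isChain_map]
      exact (List.isChain_range_succ _ _).mpr
        (fun k hk => path_edge n m hn hm c J hJ1 hJn hJc hminJ hk)
    · rw [List.range_succ_eq_map, List.map_cons, List.head?_cons]
      have : path n m c J 0 = root := by
        rw [path, if_pos (Nat.zero_le _)]; rfl
      rw [this]
  · intro w hch hh hlen
    refine (walk_bound n m hn c w root hch hh hOkroot).2 ?_
    rw [hdeproot]
    omega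

end GraphDB
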